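/- Let G be a totally disconnected, locally compact, second countable topological group. Then there is an increasing sequence (H_i)_{i∈ℕ} of compactly generated open subgroups of G whose union is G, such that for each i there exist a closed normal subgroup K_i of H_i that is locally elliptic and a finite set of primes π_i such that the quotient group H_i/K_i has a compact open subgroup that is pro-π_i. -/

import Mathlib

/-- A topological group `U` is pro-`π` (for `π` a set of primes) if for every open normal
subgroup `N`, the quotient `U ⧸ N` is a finite group all of whose prime divisors lie in `π`. -/
def IsProPi (U : Type*) [Group U] [TopologicalSpace U] (π : Finset ℕ) : Prop :=
  ∀ N : Subgroup U, N.Normal → IsOpen (N : Set U) →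
    Finite (U ⧸ N) ∧ ∀ r : ℕ, r.Prime → r ∣ Nat.card (U ⧸ N) → r ∈ π

/-- A topological group is locally elliptic if every finite subset generates a subgroup
with compact closure. -/
def LocallyElliptic (K : Type*) [Group K] [TopologicalSpace K] : Prop :=
  ∀ S : Set K, S.Finite → IsCompact (closure ((Subgroup.closure S : Subgroup K) : Set K))

open scoped Pointwise
open Set Filter Topology
set_option linter.unusedSectionVars false
set_option linter.unusedVariables false

namespace ProPiAux



section VanDantzig

variable {G : Type*} [Group G] [TopologicalSpace G] [IsTopologicalGroup G]

lemma exists_mul_nhd {W : Set G} (Wc : IsCompact W) (Wo : IsOpen W) :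
    ∃ T ∈ 𝓝 (1 : G), W * T ⊆ W := by
  apply Wc.induction_on (p := fun S ↦ ∃ T ∈ 𝓝 (1 : G), S * T ⊆ W)
    ⟨Set.univ, by simp only [univ_mem, empty_mul, empty_subset, and_self]⟩
    (fun _ _ huv ⟨T, hT, mem⟩ ↦ ⟨T, hT, (mul_subset_mul_right huv).trans mem⟩)
    (fun U V ⟨T₁, hT₁, mem1⟩ ⟨T₂, hT₂, mem2⟩ ↦ ⟨T₁ ∩ T₂, inter_mem hT₁ hT₂, by
      rw [union_mul]
      exact union_subset (mul_subset_mul_left inter_subset_left |>.trans mem1)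
        (mul_subset_mul_left inter_subset_right |>.trans mem2)⟩)
  intro x memW
  have : (x, 1) ∈ (fun p : G × G ↦ p.1 * p.2) ⁻¹' W := by simp [memW]
  rcases isOpen_prod_iff.mp (continuous_mul.isOpen_preimage W Wo) x 1 this with
    ⟨U, V, Uopen, Vopen, xmemU, onememV, prodsub⟩
  have h6 : U * V ⊆ W := mul_subset_iff.mpr (fun _ hx _ hy ↦ prodsub (mk_mem_prod hx hy))
  exact ⟨U ∩ W, ⟨U, Uopen.mem_nhds xmemU, W, fun _ a ↦ a, rfl⟩,
    V, IsOpen.mem_nhds Vopen onememV, fun _ a ↦ h6 ((mul_subset_mul_right inter_subset_left) a)⟩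

lemma exists_isCompact_isOpen_subgroup (G : Type*) [Group G] [TopologicalSpace G]
    [IsTopologicalGroup G] [LocallyCompactSpace G] [TotallyDisconnectedSpace G] :
    ∃ V : Subgroup G, IsOpen (V : Set G) ∧ IsCompact (V : Set G) := by
  have h1 : IsClosed ({1} : Set G) := by
    have h := totallyDisconnectedSpace_iff_connectedComponent_singleton.mp ‹_› (1 : G)
    rw [← h]
    exact isClosed_connectedComponent
  haveI : T2Space G := IsTopologicalGroup.t2Space_iff_one_closed.mpr h1
  obtain ⟨K, hKc, hKn⟩ := exists_compact_mem_nhds (1 : G)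
  obtain ⟨W, hWclopen, h1W, hWK⟩ :=
    (loc_compact_Haus_tot_disc_of_zero_dim.mem_nhds_iff).mp (interior_mem_nhds.mpr hKn)
  have hWc : IsCompact W := hKc.of_isClosed_subset hWclopen.isClosed (hWK.trans interior_subset)
  obtain ⟨S, hS, hSW⟩ := exists_mul_nhd hWc hWclopen.isOpen
  obtain ⟨U0, hU0S, hU0open, h1U0⟩ := mem_nhds_iff.mp hS
  set V : Set G := U0 ∩ U0⁻¹ with hV
  have hVopen : IsOpen V := hU0open.inter hU0open.inv
  have h1V : (1 : G) ∈ V := ⟨h1U0, by simpa using h1U0⟩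
  have hVinv : V⁻¹ = V := by
    simp only [hV, inter_inv, inv_inv, inter_comm]
  have hWV : W * V ⊆ W := fun a ha ↦ hSW (mul_subset_mul_left (fun x hx ↦ hU0S hx.1) ha)
  let Sg : Subgroup G :=
    { carrier := ⋃ n, V ^ (n + 1)
      mul_mem' := fun {a b} ha hb ↦ by
        rcases Set.mem_iUnion.mp ha with ⟨k, hk⟩
        rcases Set.mem_iUnion.mp hb with ⟨l, hl⟩
        exact Set.mem_iUnion.mpr ⟨k + 1 + l, by
          rw [add_assoc, pow_add]
          exact Set.mul_mem_mul hk hl⟩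
      one_mem' := Set.mem_iUnion.mpr ⟨0, by simpa using h1V⟩
      inv_mem' := fun {a} ha ↦ by
        rcases Set.mem_iUnion.mp ha with ⟨k, hk⟩
        refine Set.mem_iUnion.mpr ⟨k, ?_⟩
        rw [← hVinv]
        simpa only [inv_pow, Set.mem_inv, inv_inv] using hk }
  have hSgopen : IsOpen (Sg : Set G) := by
    refine isOpen_iUnion fun n ↦ ?_
    rw [pow_succ]
    exact hVopen.mul_left
  have hSgW : (Sg : Set G) ⊆ W := by
    have mulVpow : ∀ n : ℕ, W * V ^ (n + 1) ⊆ W := by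
      intro n
      induction n with
      | zero => simpa using hWV
      | succ n ih =>
        rw [pow_succ, ← mul_assoc]
        exact (mul_subset_mul_right ih).trans hWV
    have hsub : ∀ n : ℕ, V ^ (n + 1) ⊆ W * V ^ (n + 1) := fun n x xin ↦
      ⟨1, h1W, x, xin, one_mul x⟩
    exact Set.iUnion_subset fun n a ha ↦ mulVpow n (hsub n ha)
  exact ⟨Sg, hSgopen, hWc.of_isClosed_subset (Sg.isClosed_of_isOpen hSgopen) hSgW⟩

end VanDantzig


section BallsAndLevels

variable {H : Type*} [Group H] (U : Subgroup H) (Q : Set H)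

/-- Ball of radius `n` in the coset space `H ⧸ U`, w.r.t. the "generating set" `Q`. -/
def bal (n : ℕ) : Set (H ⧸ U) := QuotientGroup.mk '' (Q ^ n)

/-- Pointwise stabilizer (inside `U`) of the ball of radius `n`. -/
def lev (n : ℕ) : Subgroup H :=
  U ⊓ ⨅ (x : H ⧸ U) (_ : x ∈ bal U Q n), MulAction.stabilizer H x

variable {U Q}

lemma mem_lev {n : ℕ} {u : H} :
    u ∈ lev U Q n ↔ u ∈ U ∧ ∀ x ∈ bal U Q n, u • x = x := by
  simp [lev, Subgroup.mem_iInf, MulAction.mem_stabilizer_iff]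

lemma lev_le_U {n : ℕ} : lev U Q n ≤ U := inf_le_left

lemma smul_mk (g a : H) :
    g • (QuotientGroup.mk a : H ⧸ U) = QuotientGroup.mk (g * a) := rfl

lemma mem_bal_one {q : H} (hq : q ∈ Q) : (QuotientGroup.mk q : H ⧸ U) ∈ bal U Q 1 :=
  ⟨q, by simpa [pow_one] using hq, rfl⟩

lemma bal_mono (hQ1 : (1 : H) ∈ Q) {n : ℕ} : bal U Q n ⊆ bal U Q (n + 1) :=
  Set.image_mono (Set.pow_subset_pow subset_rfl hQ1 (Nat.le_succ n))

noncomputable def balRep {n : ℕ} (x : ↥(bal U Q n)) : H :=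
  ((Set.mem_image _ _ _).mp x.2).choose

lemma balRep_mem {n : ℕ} (x : ↥(bal U Q n)) : balRep x ∈ Q ^ n :=
  ((Set.mem_image _ _ _).mp x.2).choose_spec.1

lemma mk_balRep {n : ℕ} (x : ↥(bal U Q n)) :
    (QuotientGroup.mk (balRep x) : H ⧸ U) = (x : H ⧸ U) :=
  ((Set.mem_image _ _ _).mp x.2).choose_spec.2

lemma conj_mem_U {n : ℕ} {u : H} (hu : u ∈ lev U Q n) (x : ↥(bal U Q n)) :
    (balRep x)⁻¹ * u * balRep x ∈ U := by
  have hfix : u • (x : H ⧸ U) = (x : H ⧸ U) := (mem_lev.mp hu).2 _ x.2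
  rw [← mk_balRep x, smul_mk] at hfix
  have h1 := QuotientGroup.eq.mp hfix
  have h3 := U.inv_mem h1
  simpa [mul_inv_rev, mul_assoc] using h3

lemma key_mem {n : ℕ} (hUQ : ∀ u ∈ U, ∀ q ∈ Q, u * q ∈ Q) {u : H} (hu : u ∈ lev U Q n)
    (x : ↥(bal U Q n)) (b : ↥(bal U Q 1)) :
    (balRep x)⁻¹ • (u • (balRep x • (b : H ⧸ U))) ∈ bal U Q 1 := by
  obtain ⟨q, hq, hmkq⟩ := (Set.mem_image _ _ _).mp b.2
  rw [pow_one] at hq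
  rw [← hmkq, smul_mk, smul_mk, smul_mk]
  rw [show (balRep x)⁻¹ * (u * (balRep x * q)) = ((balRep x)⁻¹ * u * balRep x) * q by group]
  exact mem_bal_one (hUQ _ (conj_mem_U hu x) q hq)

variable (hUQ : ∀ u ∈ U, ∀ q ∈ Q, u * q ∈ Q)

/-- The permutation of the ball of radius 1 induced by `u ∈ lev n` localized at
a point `x` of the ball of radius `n`. -/
noncomputable def levPerm {n : ℕ} (u : ↥(lev U Q n)) (x : ↥(bal U Q n)) :
    Equiv.Perm ↥(bal U Q 1) where
  toFun b := ⟨_, key_mem hUQ u.2 x b⟩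
  invFun b := ⟨_, key_mem hUQ (inv_mem u.2) x b⟩
  left_inv b := by
    apply Subtype.ext
    show (balRep x)⁻¹ • ((u : H)⁻¹ • (balRep x •
      ((balRep x)⁻¹ • ((u : H) • (balRep x • (b : H ⧸ U)))))) = (b : H ⧸ U)
    rw [smul_inv_smul, inv_smul_smul, inv_smul_smul]
  right_inv b := by
    apply Subtype.ext
    show (balRep x)⁻¹ • ((u : H) • (balRep x •
      ((balRep x)⁻¹ • ((u : H)⁻¹ • (balRep x • (b : H ⧸ U)))))) = (b : H ⧸ U)
    rw [smul_inv_smul, smul_inv_smul, inv_smul_smul]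

noncomputable def levHom (n : ℕ) :
    ↥(lev U Q n) →* (↥(bal U Q n) → Equiv.Perm ↥(bal U Q 1)) :=
  MonoidHom.mk' (fun u x => levPerm hUQ u x) (by
    intro u v
    funext x
    apply Equiv.ext
    intro b
    apply Subtype.ext
    show (balRep x)⁻¹ • (((u * v : ↥(lev U Q n)) : H) • (balRep x • (b : H ⧸ U)))
      = (balRep x)⁻¹ • ((u : H) • (balRep x •
          ((balRep x)⁻¹ • ((v : H) • (balRep x • (b : H ⧸ U))))))
    rw [smul_inv_smul, Subgroup.coe_mul, mul_smul])

lemma levHom_ker (hQ1 : (1 : H) ∈ Q) (n : ℕ) :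
    (levHom hUQ n).ker = (lev U Q (n + 1)).subgroupOf (lev U Q n) := by
  ext u
  simp only [MonoidHom.mem_ker, Subgroup.mem_subgroupOf]
  constructor
  · intro h
    rw [mem_lev]
    refine ⟨lev_le_U u.2, ?_⟩
    rintro y ⟨hh, hhmem, rfl⟩
    rw [pow_succ] at hhmem
    obtain ⟨a, ha, q, hq, rfl⟩ := hhmem
    set x : ↥(bal U Q n) := ⟨QuotientGroup.mk a, ⟨a, ha, rfl⟩⟩ with hxdef
    have hmk : (QuotientGroup.mk (balRep x) : H ⧸ U) = QuotientGroup.mk a := mk_balRep x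
    have hu0 : (balRep x)⁻¹ * a ∈ U := QuotientGroup.eq.mp hmk
    have hb : (QuotientGroup.mk ((balRep x)⁻¹ * a * q) : H ⧸ U) ∈ bal U Q 1 :=
      mem_bal_one (hUQ _ hu0 q hq)
    set b : ↥(bal U Q 1) := ⟨_, hb⟩ with hbdef
    have hy : (QuotientGroup.mk (a * q) : H ⧸ U) = balRep x • (b : H ⧸ U) := by
      show _ = balRep x • (QuotientGroup.mk ((balRep x)⁻¹ * a * q) : H ⧸ U)
      rw [smul_mk]
      congr 1
      group
    rw [hy]
    have h1 := congrFun h x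
    have h3 : (balRep x)⁻¹ • ((u : H) • (balRep x • (b : H ⧸ U))) = (b : H ⧸ U) :=
      congrArg (fun σ : Equiv.Perm ↥(bal U Q 1) => ((σ b : ↥(bal U Q 1)) : H ⧸ U)) h1
    calc (u : H) • (balRep x • (b : H ⧸ U))
        = balRep x • ((balRep x)⁻¹ • ((u : H) • (balRep x • (b : H ⧸ U)))) := by
          rw [smul_inv_smul]
      _ = balRep x • (b : H ⧸ U) := by rw [h3]
  · intro h
    funext x
    apply Equiv.ext
    intro b
    apply Subtype.ext
    show (balRep x)⁻¹ • ((u : H) • (balRep x • (b : H ⧸ U))) = (b : H ⧸ U)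
    have hfix : (u : H) • (balRep x • (b : H ⧸ U)) = balRep x • (b : H ⧸ U) := by
      apply (mem_lev.mp h).2
      obtain ⟨q, hq, hmkq⟩ := (Set.mem_image _ _ _).mp b.2
      rw [pow_one] at hq
      rw [← hmkq, smul_mk]
      exact ⟨balRep x * q, by rw [pow_succ]; exact Set.mul_mem_mul (balRep_mem x) hq, rfl⟩
    rw [hfix, inv_smul_smul]

end BallsAndLevels

section Topo

variable {H : Type*} [Group H] [TopologicalSpace H] [IsTopologicalGroup H]
  {U : Subgroup H} {Q : Set H}

lemma isCompact_pow (hQc : IsCompact Q) : ∀ n : ℕ, IsCompact (Q ^ n)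
  | 0 => by
      rw [pow_zero]
      exact isCompact_singleton
  | n + 1 => by
      rw [pow_succ]
      exact (isCompact_pow hQc n).mul hQc

lemma bal_finite (hQc : IsCompact Q) (hUo : IsOpen (U : Set H)) (n : ℕ) :
    (bal U Q n).Finite := by
  haveI := QuotientGroup.discreteTopology hUo
  exact ((isCompact_pow hQc n).image QuotientGroup.continuous_mk).finite_of_discrete

lemma isClosed_fixer (hUo : IsOpen (U : Set H)) (x : H ⧸ U) :
    IsClosed {h : H | h • x = x} := by
  obtain ⟨g, rfl⟩ := QuotientGroup.mk_surjective x
  have : {h : H | h • (QuotientGroup.mk g : H ⧸ U) = QuotientGroup.mk g}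
      = (fun h : H => (h * g)⁻¹ * g) ⁻¹' (U : Set H) := by
    ext h
    simp only [Set.mem_setOf_eq, Set.mem_preimage, SetLike.mem_coe, smul_mk]
    exact ⟨fun hh => QuotientGroup.eq.mp hh, fun hh => QuotientGroup.eq.mpr hh⟩
  rw [this]
  exact (U.isClosed_of_isOpen hUo).preimage (by fun_prop)

lemma lev_isClosed (hUo : IsOpen (U : Set H)) (n : ℕ) :
    IsClosed ((lev U Q n : Set H)) := by
  have : (lev U Q n : Set H)
      = (U : Set H) ∩ ⋂ (x : H ⧸ U) (_ : x ∈ bal U Q n), {h : H | h • x = x} := by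
    ext h
    simp [mem_lev, Set.mem_iInter]
  rw [this]
  exact (U.isClosed_of_isOpen hUo).inter
    (isClosed_iInter fun x => isClosed_iInter fun _ => isClosed_fixer hUo x)

lemma lev_succ_le (hQ1 : (1 : H) ∈ Q) (n : ℕ) : lev U Q (n + 1) ≤ lev U Q n := by
  intro u hu
  rw [mem_lev] at hu ⊢
  exact ⟨hu.1, fun x hx => hu.2 x (bal_mono hQ1 hx)⟩

lemma lev_zero : lev U Q 0 = U := by
  apply le_antisymm lev_le_U
  intro u hu
  rw [mem_lev]
  refine ⟨hu, ?_⟩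
  rintro x ⟨a, ha, rfl⟩
  rw [pow_zero] at ha
  rw [Set.mem_one] at ha
  subst ha
  rw [smul_mk, mul_one]
  exact QuotientGroup.eq.mpr (by simpa using U.inv_mem hu)

end Topo

section MainLemma

variable {H : Type*} [Group H] [TopologicalSpace H] [IsTopologicalGroup H]

lemma main_lemma (C : Set H) (hCc : IsCompact C) (hCgen : Subgroup.closure C = ⊤)
    (U : Subgroup H) (hUo : IsOpen (U : Set H)) (hUc : IsCompact (U : Set H)) :
    ∃ K : Subgroup H, IsClosed (K : Set H) ∧ ∃ hK : K.Normal, LocallyElliptic ↥K ∧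
      ∃ π : Finset ℕ, (∀ r ∈ π, Nat.Prime r) ∧
        (letI := hK
          ∃ W : Subgroup (H ⧸ K), IsCompact (W : Set (H ⧸ K)) ∧
            IsOpen (W : Set (H ⧸ K)) ∧ IsProPi ↥W π) := by
  classical
  set S : Set H := C ∪ C⁻¹ ∪ {1} with hSdef
  set Q : Set H := (U : Set H) * S * (U : Set H) with hQdef
  have h1S : (1 : H) ∈ S := by simp [hSdef]
  have hSinv : ∀ s ∈ S, s⁻¹ ∈ S := by
    rintro s ((h | h) | h)
    · exact Or.inl (Or.inr (by simpa using h))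
    · exact Or.inl (Or.inl (by simpa using h))
    · simp only [Set.mem_singleton_iff] at h; subst h; simp [hSdef]
  have hQ1 : (1 : H) ∈ Q := by
    have := Set.mul_mem_mul (Set.mul_mem_mul U.one_mem h1S) U.one_mem
    simpa using this
  have hUQ : ∀ u ∈ U, ∀ q ∈ Q, u * q ∈ Q := by
    intro u hu q hq
    obtain ⟨us, ⟨u1, hu1, s, hs, rfl⟩, u2, hu2, rfl⟩ := hq
    rw [show u * (u1 * s * u2) = ((u * u1) * s) * u2 by group]
    exact Set.mul_mem_mul (Set.mul_mem_mul (U.mul_mem hu hu1) hs) hu2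
  have hQinveq : Q⁻¹ = Q := by
    have hsub : Q⁻¹ ⊆ Q := by
      intro a ha
      rw [Set.mem_inv] at ha
      obtain ⟨us, ⟨u1, hu1, s, hs, rfl⟩, u2, hu2, hEq⟩ := ha
      have h' : a⁻¹ = u1 * s * u2 := hEq.symm
      have hthis : a = u2⁻¹ * s⁻¹ * u1⁻¹ := by
        calc a = (a⁻¹)⁻¹ := by group
          _ = (u1 * s * u2)⁻¹ := by rw [h']
          _ = u2⁻¹ * s⁻¹ * u1⁻¹ := by group
      rw [hthis]
      exact Set.mul_mem_mul (Set.mul_mem_mul (U.inv_mem hu2) (hSinv s hs)) (U.inv_mem hu1)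
    refine Set.Subset.antisymm hsub ?_
    intro a ha
    rw [Set.mem_inv]
    exact hsub (by rwa [Set.mem_inv, inv_inv])
  have hSc : IsCompact S := (hCc.union hCc.inv).union isCompact_singleton
  have hQc : IsCompact Q := (hUc.mul hSc).mul hUc
  have hCQ : C ⊆ Q := by
    intro c hc
    have := Set.mul_mem_mul (Set.mul_mem_mul U.one_mem
      (show c ∈ S from Or.inl (Or.inl hc))) U.one_mem
    simpa using this
  -- every point of the coset space lies in some ball
  let Sg : Subgroup H :=
    { carrier := ⋃ n, Q ^ (n + 1)
      mul_mem' := fun {a b} ha hb ↦ by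
        rcases Set.mem_iUnion.mp ha with ⟨k, hk⟩
        rcases Set.mem_iUnion.mp hb with ⟨l, hl⟩
        exact Set.mem_iUnion.mpr ⟨k + 1 + l, by
          rw [add_assoc, pow_add]
          exact Set.mul_mem_mul hk hl⟩
      one_mem' := Set.mem_iUnion.mpr ⟨0, by simpa using hQ1⟩
      inv_mem' := fun {a} ha ↦ by
        rcases Set.mem_iUnion.mp ha with ⟨k, hk⟩
        refine Set.mem_iUnion.mpr ⟨k, ?_⟩
        rw [← hQinveq]
        simpa only [inv_pow, Set.mem_inv, inv_inv] using hk }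
  have hball : ∀ x : H ⧸ U, ∃ n, x ∈ bal U Q n := by
    intro x
    obtain ⟨h, rfl⟩ := QuotientGroup.mk_surjective x
    have hle : Subgroup.closure C ≤ Sg :=
      (Subgroup.closure_le _).mpr
        (fun c hc => Set.mem_iUnion.mpr ⟨0, by simpa [pow_one] using hCQ hc⟩)
    have : h ∈ Sg := hle (by rw [hCgen]; exact Subgroup.mem_top h)
    rcases Set.mem_iUnion.mp this with ⟨n, hn⟩
    exact ⟨n + 1, ⟨h, hn, rfl⟩⟩
  -- the kernel of the action on the coset space
  set K : Subgroup H := (MulAction.toPermHom H (H ⧸ U)).ker with hKdef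
  have hKmem : ∀ h : H, h ∈ K ↔ ∀ x : H ⧸ U, h • x = x := by
    intro h
    rw [hKdef, MonoidHom.mem_ker]
    constructor
    · intro he x
      have := Equiv.ext_iff.mp he x
      simpa [MulAction.toPermHom] using this
    · intro hx
      ext x
      simpa [MulAction.toPermHom] using hx x
  have hKU : K ≤ U := by
    intro h hh
    have h1 := (hKmem h).mp hh (QuotientGroup.mk 1)
    rw [smul_mk, mul_one] at h1
    have h2 := QuotientGroup.eq.mp h1
    simpa using U.inv_mem (by simpa using h2)
  have hKclosed : IsClosed (K : Set H) := by
    have : (K : Set H) = ⋂ x : H ⧸ U, {h : H | h • x = x} := by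
      ext h
      simp [hKmem, Set.mem_iInter]
    rw [this]
    exact isClosed_iInter fun x => isClosed_fixer hUo x
  have hKcompact : IsCompact (K : Set H) := hUc.of_isClosed_subset hKclosed hKU
  have hKnormal : K.Normal := MonoidHom.normal_ker _
  have hKell : LocallyElliptic ↥K := by
    intro T hT
    haveI : CompactSpace ↥K := isCompact_iff_compactSpace.mp hKcompact
    exact isClosed_closure.isCompact
  letI := hKnormal
  -- compact open subgroup of the quotient
  set W : Subgroup (H ⧸ K) := U.map (QuotientGroup.mk' K) with hWdef
  have hWcoe : (W : Set (H ⧸ K)) = (QuotientGroup.mk : H → H ⧸ K) '' (U : Set H) := by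
    rw [hWdef, Subgroup.coe_map]
    rfl
  have hWc : IsCompact (W : Set (H ⧸ K)) := by
    rw [hWcoe]
    exact hUc.image QuotientGroup.continuous_mk
  have hWo : IsOpen (W : Set (H ⧸ K)) := by
    rw [hWcoe]
    exact QuotientGroup.isOpenMap_coe _ hUo
  -- finiteness of balls
  have hbalfin : ∀ n, (bal U Q n).Finite := fun n => bal_finite hQc hUo n
  haveI hB1fin : Finite ↥(bal U Q 1) := (hbalfin 1).to_subtype
  set D : ℕ := Nat.card ↥(bal U Q 1) with hDdef
  set π : Finset ℕ := (Finset.range (D + 1)).filter Nat.Prime with hπdef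
  -- the index bound by induction
  have hlevfin : ∀ n : ℕ, (lev U Q n).relIndex U ≠ 0 ∧
      ∀ p : ℕ, p.Prime → p ∣ (lev U Q n).relIndex U → p ≤ D := by
    intro n
    induction n with
    | zero =>
      rw [lev_zero, Subgroup.relIndex_self]
      exact ⟨one_ne_zero, fun p hp hd => False.elim (hp.ne_one (Nat.dvd_one.mp hd))⟩
    | succ n ih =>
      haveI : Finite ↥(bal U Q n) := (hbalfin n).to_subtype
      have hle1 : lev U Q (n + 1) ≤ lev U Q n := lev_succ_le hQ1 n
      have hle2 : lev U Q n ≤ U := lev_le_U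
      have htower := Subgroup.relIndex_mul_relIndex _ _ _ hle1 hle2
      have hrel : (lev U Q (n + 1)).relIndex (lev U Q n)
          = Nat.card ((levHom hUQ n).range) := by
        have h1 : (lev U Q (n + 1)).relIndex (lev U Q n)
            = ((lev U Q (n + 1)).subgroupOf (lev U Q n)).index := rfl
        rw [h1, ← levHom_ker hUQ hQ1 n, Subgroup.index_ker]
      have hdvd0 : Nat.card ((levHom hUQ n).range)
          ∣ Nat.card (↥(bal U Q n) → Equiv.Perm ↥(bal U Q 1)) :=
        Subgroup.card_subgroup_dvd_card _
      letI : Fintype ↥(bal U Q 1) := Fintype.ofFinite _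
      letI : Fintype ↥(bal U Q n) := Fintype.ofFinite _
      have hcard : Nat.card (↥(bal U Q n) → Equiv.Perm ↥(bal U Q 1))
          = (D.factorial) ^ (Nat.card ↥(bal U Q n)) := by
        simp [Nat.card_fun, Nat.card_eq_fintype_card, Fintype.card_perm, hDdef]
      have hmid : (lev U Q (n + 1)).relIndex (lev U Q n) ∣ D.factorial ^ (Nat.card ↥(bal U Q n)) := by
        rw [hrel, ← hcard]
        exact hdvd0
      have hmidne : (lev U Q (n + 1)).relIndex (lev U Q n) ≠ 0 := by
        intro h0
        have := hmid
        rw [h0] at this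
        exact (pow_ne_zero _ (Nat.factorial_ne_zero D)) (Nat.eq_zero_of_zero_dvd this)
      constructor
      · rw [← htower]
        exact Nat.mul_ne_zero hmidne ih.1
      · intro p hp hd
        rw [← htower] at hd
        rcases (Nat.Prime.dvd_mul hp).mp hd with h | h
        · have hpf : p ∣ D.factorial := hp.dvd_of_dvd_pow (h.trans hmid)
          exact (Nat.Prime.dvd_factorial hp).mp hpf
        · exact ih.2 p hp h
  refine ⟨K, hKclosed, hKnormal, hKell, π,
    fun r hr => (Finset.mem_filter.mp hr).2, W, hWc, hWo, ?_⟩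
  -- IsProPi
  intro N hNnorm hNopen
  haveI := hNnorm
  set φ : ↥U →* ↥W := (QuotientGroup.mk' K).subgroupMap U with hφdef
  have hφsurj : Function.Surjective φ := (QuotientGroup.mk' K).subgroupMap_surjective U
  have hφcont : Continuous φ := by
    apply continuous_induced_rng.mpr
    exact QuotientGroup.continuous_mk.comp continuous_subtype_val
  set N' : Subgroup ↥U := N.comap φ with hN'def
  haveI hN'norm : N'.Normal := hNnorm.comap φ
  have hN'open : IsOpen (N' : Set ↥U) := by
    rw [hN'def, Subgroup.coe_comap]
    exact hNopen.preimage hφcont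
  haveI : CompactSpace ↥U := isCompact_iff_compactSpace.mp hUc
  -- find a level contained in N'
  have hsel : ∃ n : ℕ, ((fun u : ↥U => (u : H)) ⁻¹' (lev U Q n : Set H)) ⊆ (N' : Set ↥U) := by
    by_contra hcon
    push_neg at hcon
    set Cs : ℕ → Set ↥U :=
      fun n => ((fun u : ↥U => (u : H)) ⁻¹' (lev U Q n : Set H)) ∩ ((N' : Set ↥U))ᶜ with hCs
    have hCsne : ∀ n, (Cs n).Nonempty := by
      intro n
      rcases Set.not_subset.mp (hcon n) with ⟨x, hx1, hx2⟩
      exact ⟨x, hx1, hx2⟩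
    have hCscl : ∀ n, IsClosed (Cs n) :=
      fun n => ((lev_isClosed hUo n).preimage continuous_subtype_val).inter
        hN'open.isClosed_compl
    have hanti : Antitone Cs := by
      apply antitone_nat_of_succ_le
      intro n
      exact Set.inter_subset_inter_left _
        (Set.preimage_mono (fun h hh => lev_succ_le hQ1 n hh))
    have := IsCompact.nonempty_iInter_of_directed_nonempty_isCompact_isClosed Cs
      hanti.directed_ge hCsne (fun n => (hCscl n).isCompact) hCscl
    obtain ⟨u, hu⟩ := this
    rw [Set.mem_iInter] at hu
    have huK : (u : H) ∈ K := by
      rw [hKmem]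
      intro x
      obtain ⟨n, hx⟩ := hball x
      exact (mem_lev.mp (hu n).1).2 x hx
    have huN' : u ∈ N' := by
      have hφu : φ u = 1 := by
        apply Subtype.ext
        show (QuotientGroup.mk (u : H) : H ⧸ K) = 1
        exact (QuotientGroup.eq_one_iff _).mpr huK
      show φ u ∈ N
      rw [hφu]
      exact N.one_mem
    exact (hu 0).2 huN'
  obtain ⟨n₀, hn₀⟩ := hsel
  have hle : (lev U Q n₀).subgroupOf U ≤ N' := fun u hu => hn₀ hu
  have hidx : N'.index ∣ (lev U Q n₀).relIndex U := Subgroup.index_dvd_of_le hle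
  have hNfin : N'.index ≠ 0 := by
    intro h0
    rw [h0] at hidx
    exact (hlevfin n₀).1 (Nat.eq_zero_of_zero_dvd hidx)
  set ψ : ↥U →* (↥W ⧸ N) := (QuotientGroup.mk' N).comp φ with hψdef
  have hψsurj : Function.Surjective ψ :=
    (QuotientGroup.mk'_surjective N).comp hφsurj
  have hψker : ψ.ker = N' := by
    ext u
    simp only [hψdef, MonoidHom.mem_ker, MonoidHom.comp_apply, QuotientGroup.mk'_apply]
    rw [QuotientGroup.eq_one_iff]
    rfl
  haveI : (MonoidHom.ker ψ).Normal := MonoidHom.normal_ker _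
  let e : (↥U ⧸ N') ≃* (↥W ⧸ N) :=
    (QuotientGroup.quotientMulEquivOfEq hψker.symm).trans
      (QuotientGroup.quotientKerEquivOfSurjective ψ hψsurj)
  have hcards : Nat.card (↥W ⧸ N) = N'.index := by
    rw [Subgroup.index_eq_card]
    exact (Nat.card_congr e.toEquiv).symm
  have hfinWN : Finite (↥W ⧸ N) :=
    Nat.finite_of_card_ne_zero (by rw [hcards]; exact hNfin)
  refine ⟨hfinWN, ?_⟩
  intro r hr hdvd
  rw [hcards] at hdvd
  have hrd : r ∣ (lev U Q n₀).relIndex U := hdvd.trans hidx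
  have hrD := (hlevfin n₀).2 r hr hrd
  exact Finset.mem_filter.mpr ⟨Finset.mem_range.mpr (Nat.lt_succ_of_le hrD), hr⟩

end MainLemma

end ProPiAux

/-- Every t.d.l.c.s.c. group is an increasing union of compactly generated open subgroups
`H i`, each of which has a closed normal locally elliptic subgroup `K i` such that
`H i ⧸ K i` has a pro-`π i` compact open subgroup for some finite set of primes `π i`. -/
theorem exhaustion_by_locally_proPi_mod_elliptic
    (G : Type*) [Group G] [TopologicalSpace G] [IsTopologicalGroup G]
    [LocallyCompactSpace G] [TotallyDisconnectedSpace G] [SecondCountableTopology G] :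
    ∃ H : ℕ → Subgroup G, Monotone H ∧ (∀ x : G, ∃ i, x ∈ H i) ∧
      ∀ i : ℕ, IsOpen ((H i : Set G)) ∧
        (∃ C : Set G, C ⊆ H i ∧ IsCompact C ∧ Subgroup.closure C = H i) ∧
        ∃ K : Subgroup ↥(H i), IsClosed (K : Set ↥(H i)) ∧
          ∃ hK : K.Normal, LocallyElliptic ↥K ∧
            ∃ π : Finset ℕ, (∀ r ∈ π, Nat.Prime r) ∧
              (letI := hK
                ∃ W : Subgroup (↥(H i) ⧸ K), IsCompact (W : Set (↥(H i) ⧸ K)) ∧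
                  IsOpen (W : Set (↥(H i) ⧸ K)) ∧ IsProPi ↥W π) := by
  classical
  obtain ⟨V, hVo, hVc⟩ := ProPiAux.exists_isCompact_isOpen_subgroup G
  haveI : Nonempty G := ⟨1⟩
  set u : ℕ → G := TopologicalSpace.denseSeq G with hudef
  have hu : DenseRange u := TopologicalSpace.denseRange_denseSeq G
  set Cset : ℕ → Set G := fun i => (V : Set G) ∪ (u '' {j | j < i}) with hCset
  set Hs : ℕ → Subgroup G := fun i => Subgroup.closure (Cset i) with hHsdef
  have hCsetc : ∀ i, IsCompact (Cset i) :=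
    fun i => hVc.union (((Set.finite_Iio i).image u).isCompact)
  have hVle : ∀ i, ∀ v ∈ V, v ∈ Hs i :=
    fun i v hv => Subgroup.subset_closure (Or.inl hv)
  have hmono : Monotone Hs := by
    intro i j hij
    exact Subgroup.closure_mono
      (Set.union_subset_union_right _ (Set.image_mono fun k hk => lt_of_lt_of_le hk hij))
  have hopen : ∀ i, IsOpen ((Hs i : Set G)) := by
    intro i
    apply Subgroup.isOpen_of_one_mem_interior
    exact (interior_maximal (fun v hv => hVle i v hv) hVo) V.one_mem
  have hcover : ∀ x : G, ∃ i, x ∈ Hs i := by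
    intro x
    have hne : (x • (V : Set G)).Nonempty :=
      ⟨x, by simpa using Set.smul_mem_smul_set (a := x) V.one_mem⟩
    obtain ⟨j, hj⟩ := hu.exists_mem_open (hVo.smul x) hne
    obtain ⟨v, hv, hxv⟩ := Set.mem_smul_set.mp hj
    refine ⟨j + 1, ?_⟩
    have hx : x = u j * v⁻¹ := by
      have : x * v = u j := hxv
      rw [← this]; group
    rw [hx]
    refine mul_mem (Subgroup.subset_closure (Or.inr ⟨j, by simp, rfl⟩))
      (inv_mem (hVle _ v hv))
  refine ⟨Hs, hmono, hcover, ?_⟩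
  intro i
  have hclosed : IsClosed ((Hs i : Set G)) := (Hs i).isClosed_of_isOpen (hopen i)
  have hemb : Topology.IsClosedEmbedding ((↑) : ↥(Hs i) → G) :=
    hclosed.isClosedEmbedding_subtypeVal
  set C' : Set ↥(Hs i) := ((↑) : ↥(Hs i) → G) ⁻¹' (Cset i) with hC'def
  have hC'c : IsCompact C' := hemb.isProperMap.isCompact_preimage (hCsetc i)
  have hC'gen : Subgroup.closure C' = ⊤ := by
    rw [eq_top_iff]
    rintro ⟨g, hg⟩ -
    refine Subgroup.closure_induction
      (p := fun g _ => ∀ h : g ∈ Hs i, (⟨g, h⟩ : ↥(Hs i)) ∈ Subgroup.closure C')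
      ?_ ?_ ?_ ?_ hg hg
    · intro x hx h
      exact Subgroup.subset_closure (show x ∈ Cset i from hx)
    · intro h
      exact (Subgroup.closure C').one_mem
    · intro x y hx hy px py h
      exact mul_mem (px hx) (py hy)
    · intro x hx px h
      exact inv_mem (px hx)
  set U' : Subgroup ↥(Hs i) := V.subgroupOf (Hs i) with hU'def
  have hU'o : IsOpen (U' : Set ↥(Hs i)) := Subgroup.subgroupOf_isOpen (Hs i) V hVo
  have hU'c : IsCompact (U' : Set ↥(Hs i)) := by
    have hcoe : (U' : Set ↥(Hs i)) = ((↑) : ↥(Hs i) → G) ⁻¹' (V : Set G) := by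
      ext x
      simp [hU'def, Subgroup.mem_subgroupOf]
    rw [hcoe]
    exact hemb.isProperMap.isCompact_preimage hVc
  exact ⟨hopen i, ⟨Cset i, Subgroup.subset_closure, hCsetc i, rfl⟩,
    ProPiAux.main_lemma C' hC'c hC'gen U' hU'o hU'c⟩
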